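/- In the setting of the previous statement, if additionally the Levi determinant det[[Q_a,Q_b,Q_c],[Q_{xa},Q_{xb},Q_{xc}],[Q_{ya},Q_{yb},Q_{yc}]] = 0 at p, then A_{z_{xx}} Q_{ya} + B_{z_{xx}} Q_{yb} + C_{z_{xx}} Q_{yc} = 0. (This is the statement F_{z_{xx}} = 0: the associated PDE function F = Q_y(x,y,A,B,C) is independent of z_{xx} when the Levi form is degenerate of rank 1.) -/
import Mathlib


/-- if in addition the Levi determinant vanishes at the point, then
`A_{z_{xx}} Q_{ya} + B_{z_{xx}} Q_{yb} + C_{z_{xx}} Q_{yc} = 0`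
(i.e. `F_{z_{xx}} = 0`: the associated PDE function is independent of `z_{xx}`). -/
theorem stmt_14 (Qa Qb Qc Qxa Qxb Qxc Qxxa Qxxb Qxxc Qya Qyb Qyc : ℝ)
    (Az Azx Azxx Bz Bzx Bzxx Cz Czx Czxx : ℝ)
    (hΔ : Matrix.det !![Qa, Qb, Qc; Qxa, Qxb, Qxc; Qxxa, Qxxb, Qxxc] ≠ 0)
    (hA1 : Qa * Az + Qxa * Azx + Qxxa * Azxx = 1)
    (hA2 : Qb * Az + Qxb * Azx + Qxxb * Azxx = 0)
    (hA3 : Qc * Az + Qxc * Azx + Qxxc * Azxx = 0)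
    (hB1 : Qa * Bz + Qxa * Bzx + Qxxa * Bzxx = 0)
    (hB2 : Qb * Bz + Qxb * Bzx + Qxxb * Bzxx = 1)
    (hB3 : Qc * Bz + Qxc * Bzx + Qxxc * Bzxx = 0)
    (hC1 : Qa * Cz + Qxa * Czx + Qxxa * Czxx = 0)
    (hC2 : Qb * Cz + Qxb * Czx + Qxxb * Czxx = 0)
    (hC3 : Qc * Cz + Qxc * Czx + Qxxc * Czxx = 1)
    (hLevi : Matrix.det !![Qa, Qb, Qc; Qxa, Qxb, Qxc; Qya, Qyb, Qyc] = 0) :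
    Azxx * Qya + Bzxx * Qyb + Czxx * Qyc = 0 := by
  simp [Matrix.det_fin_three] at hΔ hLevi
  have key : (Qa * (Qxb * Qxxc) - Qa * (Qxc * Qxxb) - Qb * (Qxa * Qxxc)
      + Qb * (Qxc * Qxxa) + Qc * (Qxa * Qxxb) - Qc * (Qxb * Qxxa)) *
      (Azxx * Qya + Bzxx * Qyb + Czxx * Qyc) = 0 := by
    linear_combination
      Qya * ((Qb * Qxc - Qxb * Qc) * hA1 - (Qa * Qxc - Qxa * Qc) * hA2
        + (Qa * Qxb - Qxa * Qb) * hA3) +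
      Qyb * ((Qb * Qxc - Qxb * Qc) * hB1 - (Qa * Qxc - Qxa * Qc) * hB2
        + (Qa * Qxb - Qxa * Qb) * hB3) +
      Qyc * ((Qb * Qxc - Qxb * Qc) * hC1 - (Qa * Qxc - Qxa * Qc) * hC2
        + (Qa * Qxb - Qxa * Qb) * hC3) + hLevi
  rcases mul_eq_zero.mp key with h | h
  · exact absurd (by linear_combination h) hΔ
  · exact h
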